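/- Let 0 < γ < 1 and define ν(ζ,τ) = ζ E_γ(τ^γ) for ζ ∈ ℝ, τ ≥ 0. Then ν(ζ,0) = ζ for all ζ, and for every ζ ∈ ℝ and τ > 0, ν solves the linear time-fractional Fokker–Planck equation D^γ_τ ν(ζ,τ) = −∂_ζ(ζ ν(ζ,τ)) + ∂²_{ζζ}((ζ²/2) ν(ζ,τ)), where D^γ_τ is the Caputo time-fractional derivative. -/

import Mathlib

open MeasureTheory Real Filter

/-- The Mittag-Leffler function `E_γ(x) = Σ_{n=0}^∞ x^n / Γ(nγ+1)`. -/
noncomputable def mittagLeffler (γ x : ℝ) : ℝ :=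
  ∑' n : ℕ, x ^ n / Real.Gamma ((n : ℝ) * γ + 1)


lemma gamma_conv {γ t : ℝ} (hγ0 : 0 < γ) (hγ1 : γ < 1) (ht : 1 - γ < t) :
    Real.Gamma t * (t + γ - 1) ^ γ ≤ Real.Gamma (t + γ) := by
  have h1 : (0:ℝ) < t := lt_trans (by linarith) ht
  have h2 : (0:ℝ) < t + γ - 1 := by linarith
  have h3 : (0:ℝ) < t + γ := by linarith
  have key := Real.convexOn_log_Gamma.2 (Set.mem_Ioi.mpr h2) (Set.mem_Ioi.mpr h3)
    hγ0.le (by linarith : (0:ℝ) ≤ 1 - γ) (by ring)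
  simp only [smul_eq_mul, Function.comp_apply] at key
  have harg : γ * (t + γ - 1) + (1 - γ) * (t + γ) = t := by ring
  rw [harg] at key
  have hrec : Real.Gamma (t + γ) = (t + γ - 1) * Real.Gamma (t + γ - 1) := by
    have := Real.Gamma_add_one h2.ne'
    rw [show t + γ - 1 + 1 = t + γ by ring] at this
    exact this
  have hlog : Real.log (Real.Gamma (t + γ - 1))
      = Real.log (Real.Gamma (t + γ)) - Real.log (t + γ - 1) := by
    rw [hrec, Real.log_mul h2.ne' (Real.Gamma_pos_of_pos h2).ne']
    ring
  rw [hlog] at key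
  have e1 : Real.Gamma t = Real.exp (Real.log (Real.Gamma t)) :=
    (Real.exp_log (Real.Gamma_pos_of_pos h1)).symm
  have e2 : (t + γ - 1) ^ γ = Real.exp (Real.log (t + γ - 1) * γ) :=
    Real.rpow_def_of_pos h2 γ
  have e3 : Real.Gamma (t + γ) = Real.exp (Real.log (Real.Gamma (t + γ))) :=
    (Real.exp_log (Real.Gamma_pos_of_pos h3)).symm
  rw [e1, e2, ← Real.exp_add]
  rw [e3]
  exact Real.exp_le_exp.mpr (by nlinarith [key])

lemma summable_rpow_div_Gamma {γ : ℝ} (hγ0 : 0 < γ) (hγ1 : γ < 1) {r : ℝ} (hr : 0 ≤ r)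
    (d : ℝ) : Summable (fun n : ℕ => r ^ n / Real.Gamma ((n:ℝ) * γ + d)) := by
  apply summable_of_ratio_norm_eventually_le (r := 1/2) (by norm_num)
  set M := (2*r+1) ^ γ⁻¹ with hM
  have hM0 : 0 ≤ M := Real.rpow_nonneg (by linarith) _
  obtain ⟨N, hN⟩ := exists_nat_ge ((M + 2 + |d|) / γ)
  rw [eventually_atTop]
  refine ⟨N, fun n hn => ?_⟩
  have hnγ : M + 2 + |d| ≤ (n:ℝ) * γ := by
    rw [div_le_iff₀ hγ0] at hN
    calc M + 2 + |d| ≤ (N:ℝ) * γ := hN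
    _ ≤ (n:ℝ) * γ := by
        have : (N:ℝ) ≤ n := Nat.cast_le.mpr hn
        nlinarith
  set t := (n:ℝ) * γ + d with htdef
  have habs : -|d| ≤ d := neg_abs_le d
  have ht1 : 1 - γ < t := by simp only [htdef]; nlinarith [abs_nonneg d]
  have ht2 : M ≤ t + γ - 1 := by simp only [htdef]; nlinarith
  have h2 : (0:ℝ) < t + γ - 1 := by nlinarith
  have hgp : 0 < Real.Gamma t := Real.Gamma_pos_of_pos (by linarith)
  have hgp2 : 0 < Real.Gamma (t + γ) := Real.Gamma_pos_of_pos (by linarith)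
  have hMg : M ^ γ = 2*r+1 := by
    rw [hM, ← Real.rpow_mul (by linarith : (0:ℝ) ≤ 2*r+1), inv_mul_cancel₀ hγ0.ne',
      Real.rpow_one]
  have hGa : Real.Gamma t * (2*r+1) ≤ Real.Gamma (t + γ) := by
    calc Real.Gamma t * (2*r+1) = Real.Gamma t * M ^ γ := by rw [hMg]
    _ ≤ Real.Gamma t * (t + γ - 1) ^ γ := by
        have := Real.rpow_le_rpow hM0 ht2 hγ0.le
        nlinarith
    _ ≤ Real.Gamma (t + γ) := gamma_conv hγ0 hγ1 ht1
  have hcast : ((n:ℝ) + 1) * γ + d = t + γ := by simp only [htdef]; ring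
  have hnn1 : (0:ℝ) ≤ r ^ (n+1) / Real.Gamma (t + γ) := by positivity
  have hnn2 : (0:ℝ) ≤ r ^ n / Real.Gamma t := by positivity
  simp only [Nat.cast_add, Nat.cast_one, hcast]
  rw [Real.norm_of_nonneg hnn1, Real.norm_of_nonneg hnn2]
  calc r ^ (n+1) / Real.Gamma (t + γ)
      ≤ r ^ (n+1) / (Real.Gamma t * (2*r+1)) := by
        apply div_le_div_of_nonneg_left (by positivity) (by positivity) hGa
    _ = (r / (2*r+1)) * (r ^ n / Real.Gamma t) := by
        rw [pow_succ]; field_simp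
    _ ≤ (1/2) * (r ^ n / Real.Gamma t) := by
        apply mul_le_mul_of_nonneg_right _ hnn2
        rw [div_le_div_iff₀ (by linarith) (by norm_num)]
        linarith

lemma betaIntegrableOn {a b τ : ℝ} (ha : 0 < a) (hb : 0 < b) (hτ : 0 < τ) :
    MeasureTheory.IntegrableOn (fun ρ : ℝ => ρ ^ (a-1) * (τ - ρ) ^ (b-1)) (Set.Ioc 0 τ) := by
  have hmeas : AEStronglyMeasurable (fun ρ : ℝ => (τ - ρ) ^ (b-1))
      (volume.restrict (Set.Ioc (0:ℝ) (τ/2))) := by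
    apply Measurable.aestronglyMeasurable
    exact (measurable_const.sub measurable_id).pow measurable_const
  have hmeas2 : AEStronglyMeasurable (fun ρ : ℝ => ρ ^ (a-1))
      (volume.restrict (Set.Ioc (τ/2) τ)) := by
    apply Measurable.aestronglyMeasurable
    exact measurable_id.pow measurable_const
  have half : Set.Ioc (0:ℝ) τ = Set.Ioc 0 (τ/2) ∪ Set.Ioc (τ/2) τ := by
    rw [Set.Ioc_union_Ioc_eq_Ioc (by linarith) (by linarith)]
  rw [half]
  apply MeasureTheory.IntegrableOn.union
  · -- near 0 : ρ^(a-1) integrable, other factor bounded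
    have hint : MeasureTheory.IntegrableOn (fun ρ : ℝ => ρ ^ (a-1)) (Set.Ioc 0 (τ/2)) := by
      rw [← intervalIntegrable_iff_integrableOn_Ioc_of_le (by linarith)]
      exact intervalIntegral.intervalIntegrable_rpow' (by linarith)
    rw [show (fun ρ:ℝ => ρ^(a-1)*(τ-ρ)^(b-1)) = fun ρ => (τ-ρ)^(b-1) * ρ^(a-1) from
      funext fun ρ => mul_comm _ _]
    apply MeasureTheory.Integrable.bdd_mul (c := (τ/2) ^ (b-1) + τ ^ (b-1)) hint hmeas
    rw [MeasureTheory.ae_restrict_iff' measurableSet_Ioc]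
    filter_upwards with ρ hρ
    have h1 : τ/2 ≤ τ - ρ := by linarith [hρ.2]
    have h2 : τ - ρ ≤ τ := by linarith [hρ.1]
    rw [Real.norm_of_nonneg (Real.rpow_nonneg (by linarith) _)]
    rcases le_or_gt 0 (b-1) with hb1 | hb1
    · have := Real.rpow_le_rpow (by linarith) h2 hb1
      have h3 : (0:ℝ) ≤ (τ/2) ^ (b-1) := Real.rpow_nonneg (by linarith) _
      linarith
    · have := Real.rpow_le_rpow_of_nonpos (by linarith) h1 hb1.le
      have h3 : (0:ℝ) ≤ τ ^ (b-1) := Real.rpow_nonneg (by linarith) _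
      linarith
  · -- near τ : (τ-ρ)^(b-1) integrable, other factor bounded
    have hint : MeasureTheory.IntegrableOn (fun ρ : ℝ => (τ - ρ) ^ (b-1)) (Set.Ioc (τ/2) τ) := by
      rw [← intervalIntegrable_iff_integrableOn_Ioc_of_le (by linarith)]
      have := (intervalIntegral.intervalIntegrable_rpow' (r := b-1) (a := 0) (b := τ/2)
        (by linarith)).comp_sub_left τ
      simp only [sub_zero] at this
      rw [show τ - τ/2 = τ/2 by ring] at this
      exact this.symm
    apply MeasureTheory.Integrable.bdd_mul (c := (τ/2) ^ (a-1) + τ ^ (a-1)) hint hmeas2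
    rw [MeasureTheory.ae_restrict_iff' measurableSet_Ioc]
    filter_upwards with ρ hρ
    have h1 : τ/2 ≤ ρ := hρ.1.le
    have h2 : ρ ≤ τ := hρ.2
    rw [Real.norm_of_nonneg (Real.rpow_nonneg (by linarith) _)]
    rcases le_or_gt 0 (a-1) with ha1 | ha1
    · have := Real.rpow_le_rpow (by linarith) h2 ha1
      have h3 : (0:ℝ) ≤ (τ/2) ^ (a-1) := Real.rpow_nonneg (by linarith) _
      linarith
    · have := Real.rpow_le_rpow_of_nonpos (by linarith) h1 ha1.le
      have h3 : (0:ℝ) ≤ τ ^ (a-1) := Real.rpow_nonneg (by linarith) _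
      linarith

lemma betaIntegralValue {a b τ : ℝ} (ha : 0 < a) (hb : 0 < b) (hτ : 0 < τ) :
    ∫ ρ in (0:ℝ)..τ, ρ ^ (a-1) * (τ - ρ) ^ (b-1)
      = τ ^ (a+b-1) * (Real.Gamma a * Real.Gamma b / Real.Gamma (a+b)) := by
  have hC : ∫ x in (0:ℝ)..τ, (x:ℂ) ^ ((a:ℂ) - 1) * ((τ:ℂ) - x) ^ ((b:ℂ) - 1)
      = (τ:ℂ) ^ ((a:ℂ) + b - 1) * Complex.betaIntegral a b :=
    Complex.betaIntegral_scaled a b hτ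
  have hcongr : ∫ x in (0:ℝ)..τ, (x:ℂ) ^ ((a:ℂ) - 1) * ((τ:ℂ) - x) ^ ((b:ℂ) - 1)
      = ((∫ ρ in (0:ℝ)..τ, ρ ^ (a-1) * (τ - ρ) ^ (b-1) : ℝ) : ℂ) := by
    rw [← intervalIntegral.integral_ofReal]
    apply intervalIntegral.integral_congr
    intro x hx
    rw [Set.uIcc_of_le hτ.le] at hx
    beta_reduce
    have hx0 : (0:ℝ) ≤ x := hx.1
    have hx1 : (0:ℝ) ≤ τ - x := by linarith [hx.2]
    rw [show ((a:ℂ) - 1) = ((a-1:ℝ):ℂ) by push_cast; ring,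
      show ((b:ℂ) - 1) = ((b-1:ℝ):ℂ) by push_cast; ring,
      show ((τ:ℂ) - (x:ℂ)) = ((τ - x : ℝ):ℂ) by push_cast; ring,
      ← Complex.ofReal_cpow hx0, ← Complex.ofReal_cpow hx1, ← Complex.ofReal_mul]
  have hβ : Complex.betaIntegral a b
      = (Real.Gamma a : ℂ) * Real.Gamma b / Real.Gamma (a+b) := by
    have h1 : Complex.Gamma a * Complex.Gamma b
        = Complex.Gamma ((a:ℂ) + b) * Complex.betaIntegral a b :=
      Complex.Gamma_mul_Gamma_eq_betaIntegral (by simpa using ha) (by simpa using hb)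
    have h2' : ((Real.Gamma (a+b) : ℝ) : ℂ) ≠ 0 :=
      Complex.ofReal_ne_zero.mpr (Real.Gamma_pos_of_pos (by linarith)).ne'
    rw [eq_div_iff h2']
    rw [show ((a:ℂ) + b) = ((a + b : ℝ) : ℂ) by push_cast; ring] at h1
    rw [Complex.Gamma_ofReal, Complex.Gamma_ofReal, Complex.Gamma_ofReal] at h1
    linear_combination -h1
  have hpow : (τ:ℂ) ^ ((a:ℂ) + b - 1) = ((τ ^ (a+b-1) : ℝ) : ℂ) := by
    rw [Complex.ofReal_cpow hτ.le]
    push_cast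
    ring_nf
  rw [hcongr, hβ, hpow] at hC
  have := hC
  rw [show ((τ ^ (a+b-1) : ℝ) : ℂ) * ((Real.Gamma a : ℂ) * Real.Gamma b / Real.Gamma (a+b))
      = ((τ ^ (a+b-1) * (Real.Gamma a * Real.Gamma b / Real.Gamma (a+b)) : ℝ) : ℂ) by
    push_cast; ring] at this
  exact_mod_cast this

lemma summable_ml {γ : ℝ} (hγ0 : 0 < γ) (hγ1 : γ < 1) {y : ℝ} (hy : 0 ≤ y) (d : ℝ) :
    Summable (fun n : ℕ => y ^ ((n:ℝ)*γ) / Real.Gamma ((n:ℝ) * γ + d)) := by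
  apply (summable_rpow_div_Gamma hγ0 hγ1 (Real.rpow_nonneg hy γ) d).congr
  intro n
  rw [← Real.rpow_natCast (y ^ γ) n, ← Real.rpow_mul hy, mul_comm γ (n:ℝ)]

lemma hasDerivAt_ml {γ : ℝ} (hγ0 : 0 < γ) (hγ1 : γ < 1) {y : ℝ} (hy : 0 < y) :
    HasDerivAt (fun z : ℝ => ∑' n : ℕ, z ^ ((n:ℝ)*γ) / Real.Gamma ((n:ℝ)*γ + 1))
      (∑' n : ℕ, ((n:ℝ)*γ) * y ^ ((n:ℝ)*γ - 1) / Real.Gamma ((n:ℝ)*γ + 1)) y := by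
  set u : ℕ → ℝ := fun n =>
    (2/y) * (((y/2) ^ γ) ^ n / Real.Gamma ((n:ℝ)*γ)) +
    (1/(y+1)) * (((y+1) ^ γ) ^ n / Real.Gamma ((n:ℝ)*γ)) with hu
  have hu_sum : Summable u := by
    apply Summable.add
    · apply Summable.mul_left
      apply (summable_rpow_div_Gamma hγ0 hγ1 (r := (y/2)^γ)
        (Real.rpow_nonneg (by positivity) γ) 0).congr
      intro n; rw [add_zero]
    · apply Summable.mul_left
      apply (summable_rpow_div_Gamma hγ0 hγ1 (r := (y+1)^γ)
        (Real.rpow_nonneg (by positivity) γ) 0).congr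
      intro n; rw [add_zero]
  apply hasDerivAt_tsum_of_isPreconnected hu_sum isOpen_Ioo
    (isPreconnected_Ioo (a := y/2) (b := y+1))
    (g := fun (n : ℕ) (z : ℝ) => z ^ ((n:ℝ)*γ) / Real.Gamma ((n:ℝ)*γ + 1))
    (g' := fun (n : ℕ) (z : ℝ) => ((n:ℝ)*γ) * z ^ ((n:ℝ)*γ - 1) / Real.Gamma ((n:ℝ)*γ + 1))
    (y₀ := y)
  · intro n z hz
    have hz0 : (0:ℝ) < z := lt_trans (by linarith) hz.1
    exact (Real.hasDerivAt_rpow_const (Or.inl hz0.ne')).div_const _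
  · intro n z hz
    have hz0 : (0:ℝ) < z := lt_trans (by linarith) hz.1
    rcases Nat.eq_zero_or_pos n with rfl | hn
    · simp [Real.Gamma_zero, hu]
    · have hp : (0:ℝ) < (n:ℝ)*γ := by
        have : (1:ℝ) ≤ n := Nat.one_le_cast.mpr hn
        nlinarith
      have hΓ : Real.Gamma ((n:ℝ)*γ + 1) = ((n:ℝ)*γ) * Real.Gamma ((n:ℝ)*γ) :=
        Real.Gamma_add_one hp.ne'
      have hΓp : 0 < Real.Gamma ((n:ℝ)*γ) := Real.Gamma_pos_of_pos hp
      have hval : ((n:ℝ)*γ) * z ^ ((n:ℝ)*γ - 1) / Real.Gamma ((n:ℝ)*γ + 1)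
          = z ^ ((n:ℝ)*γ - 1) / Real.Gamma ((n:ℝ)*γ) := by
        rw [hΓ]; field_simp
      rw [hval, Real.norm_of_nonneg (by positivity)]
      have hb1 : z ^ ((n:ℝ)*γ - 1) ≤ (y/2) ^ ((n:ℝ)*γ - 1) + (y+1) ^ ((n:ℝ)*γ - 1) := by
        rcases le_or_gt 0 ((n:ℝ)*γ - 1) with hc | hc
        · have := Real.rpow_le_rpow hz0.le hz.2.le hc
          have h3 : (0:ℝ) ≤ (y/2) ^ ((n:ℝ)*γ - 1) := Real.rpow_nonneg (by linarith) _
          linarith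
        · have := Real.rpow_le_rpow_of_nonpos (by linarith) hz.1.le hc.le
          have h3 : (0:ℝ) ≤ (y+1) ^ ((n:ℝ)*γ - 1) := Real.rpow_nonneg (by linarith) _
          linarith
      have e1 : (y/2) ^ ((n:ℝ)*γ - 1) = (2/y) * ((y/2) ^ γ) ^ n := by
        rw [← Real.rpow_natCast ((y/2) ^ γ) n, ← Real.rpow_mul (by linarith), mul_comm γ (n:ℝ),
          Real.rpow_sub (by linarith), Real.rpow_one]
        field_simp
      have e2 : (y+1) ^ ((n:ℝ)*γ - 1) = (1/(y+1)) * ((y+1) ^ γ) ^ n := by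
        rw [← Real.rpow_natCast ((y+1) ^ γ) n, ← Real.rpow_mul (by linarith), mul_comm γ (n:ℝ),
          Real.rpow_sub (by linarith), Real.rpow_one]
        field_simp
      rw [hu]
      calc z ^ ((n:ℝ)*γ - 1) / Real.Gamma ((n:ℝ)*γ)
          ≤ ((y/2) ^ ((n:ℝ)*γ - 1) + (y+1) ^ ((n:ℝ)*γ - 1)) / Real.Gamma ((n:ℝ)*γ) := by
            apply div_le_div_of_nonneg_right hb1 hΓp.le |>.trans_eq rfl
        _ = (2/y) * (((y/2) ^ γ) ^ n / Real.Gamma ((n:ℝ)*γ)) +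
            (1/(y+1)) * (((y+1) ^ γ) ^ n / Real.Gamma ((n:ℝ)*γ)) := by
            rw [e1, e2]; ring
  · exact Set.mem_Ioo.mpr ⟨by linarith, by linarith⟩
  · exact summable_ml hγ0 hγ1 hy.le 1
  · exact Set.mem_Ioo.mpr ⟨by linarith, by linarith⟩

lemma ml_eq {γ : ℝ} (hγ0 : 0 < γ) {y : ℝ} (hy : 0 ≤ y) :
    mittagLeffler γ (y ^ γ) = ∑' n : ℕ, y ^ ((n:ℝ)*γ) / Real.Gamma ((n:ℝ)*γ + 1) := by
  unfold mittagLeffler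
  apply tsum_congr
  intro n
  rw [← Real.rpow_natCast (y ^ γ) n, ← Real.rpow_mul hy, mul_comm γ (n:ℝ)]

/-- The function `ν(ζ,τ) = ζ E_γ(τ^γ)` satisfies `ν(ζ,0) = ζ` and solves the linear
time-fractional Fokker–Planck equation
`D^γ_τ ν = −∂_ζ(ζν) + ∂²_{ζζ}((ζ²/2)ν)` for `τ > 0`,
where `D^γ_τ` is the Caputo time-fractional derivative. -/
theorem tffpe_example2 (γ : ℝ) (hγ0 : 0 < γ) (hγ1 : γ < 1)
    (ν : ℝ → ℝ → ℝ) (hν : ν = fun ζ τ => ζ * mittagLeffler γ (τ ^ γ)) :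
    (∀ ζ : ℝ, ν ζ 0 = ζ) ∧
    ∀ (ζ τ : ℝ), 0 < τ →
      (1 / Real.Gamma (1 - γ)) * (∫ ρ in (0:ℝ)..τ, deriv (fun ρ => ν ζ ρ) ρ * (τ - ρ) ^ (-γ))
        = -(deriv (fun z => z * ν z τ) ζ)
          + deriv (deriv fun z => z ^ 2 / 2 * ν z τ) ζ := by
  subst hν
  constructor
  · intro ζ
    have h0 : mittagLeffler γ ((0:ℝ) ^ γ) = 1 := by
      rw [Real.zero_rpow hγ0.ne']
      unfold mittagLeffler
      rw [tsum_eq_single 0]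
      · norm_num [Real.Gamma_one]
      · intro n hn
        simp [zero_pow hn]
    simp only [h0, mul_one]
  · intro ζ τ hτ
    set M := mittagLeffler γ (τ ^ γ) with hM
    -- RHS
    have e1 : (fun z : ℝ => z * (z * M)) = fun z => M * z ^ 2 := by funext z; ring
    have d1 : HasDerivAt (fun z : ℝ => z * (z * M)) (M * (2 * ζ)) ζ := by
      rw [e1]
      simpa using (hasDerivAt_pow 2 ζ).const_mul M
    have d2 : ∀ z : ℝ, HasDerivAt (fun w : ℝ => w ^ 2 / 2 * (w * M)) (3 * M / 2 * z ^ 2) z := by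
      intro z
      have h := (hasDerivAt_pow 3 z).const_mul (M/2)
      have heq : (fun w : ℝ => (M/2) * w ^ 3) = fun w => w ^ 2 / 2 * (w * M) := by
        funext w; ring
      rw [heq] at h
      refine h.congr_deriv ?_
      push_cast; ring
    have d2' : (deriv fun z : ℝ => z ^ 2 / 2 * (z * M)) = fun z => 3 * M / 2 * z ^ 2 :=
      funext fun z => (d2 z).deriv
    have d3 : HasDerivAt (fun z : ℝ => 3 * M / 2 * z ^ 2) (3 * M / 2 * (2 * ζ)) ζ := by
      simpa using (hasDerivAt_pow 2 ζ).const_mul (3 * M / 2)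
    have hRHS : -(deriv (fun z : ℝ => z * (z * M)) ζ)
        + deriv (deriv fun z : ℝ => z ^ 2 / 2 * (z * M)) ζ = ζ * M := by
      rw [d1.deriv, d2', d3.deriv]; ring
    -- the derivative of ν in time
    have hderiv : ∀ ρ : ℝ, 0 < ρ → deriv (fun x : ℝ => ζ * mittagLeffler γ (x ^ γ)) ρ
        = ζ * ∑' n : ℕ, ((n:ℝ)*γ) * ρ ^ ((n:ℝ)*γ - 1) / Real.Gamma ((n:ℝ)*γ + 1) := by
      intro ρ hρ
      have H := (hasDerivAt_ml hγ0 hγ1 hρ).const_mul ζ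
      have hev : (fun x : ℝ => ζ * mittagLeffler γ (x ^ γ)) =ᶠ[nhds ρ]
          (fun x : ℝ => ζ * ∑' n : ℕ, x ^ ((n:ℝ)*γ) / Real.Gamma ((n:ℝ)*γ + 1)) := by
        filter_upwards [eventually_gt_nhds hρ] with x hx
        rw [ml_eq hγ0 hx.le]
      exact (H.congr_of_eventuallyEq hev).deriv
    -- the series of integrands
    set F : ℕ → ℝ → ℝ := fun n ρ =>
      (((n:ℝ)*γ) * ρ ^ ((n:ℝ)*γ - 1) / Real.Gamma ((n:ℝ)*γ + 1)) * (τ - ρ) ^ (-γ) with hF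
    have hF0 : F 0 = fun _ => 0 := by funext ρ; simp [hF]
    have hFc : ∀ n : ℕ, 1 ≤ n → F n = fun ρ =>
        ((n:ℝ)*γ / Real.Gamma ((n:ℝ)*γ + 1)) *
          (ρ ^ ((n:ℝ)*γ - 1) * (τ - ρ) ^ ((1-γ) - 1)) := by
      intro n hn
      funext ρ
      rw [hF, show (1-γ) - 1 = -γ by ring]
      ring
    have hnγpos : ∀ n : ℕ, 1 ≤ n → (0:ℝ) < (n:ℝ)*γ := by
      intro n hn
      have : (1:ℝ) ≤ n := Nat.one_le_cast.mpr hn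
      nlinarith
    have hInt : ∀ n : ℕ, Integrable (F n) (volume.restrict (Set.Ioc 0 τ)) := by
      intro n
      rcases Nat.eq_zero_or_pos n with rfl | hn
      · rw [hF0]; exact integrable_zero _ _ _
      · rw [hFc n hn]
        exact ((betaIntegrableOn (hnγpos n hn) (by linarith) hτ).const_mul _)
    have hval : ∀ n : ℕ, 1 ≤ n → ∫ ρ in Set.Ioc (0:ℝ) τ, F n ρ
        = Real.Gamma (1-γ) * (τ ^ (((n:ℝ)-1)*γ) / Real.Gamma (((n:ℝ)-1)*γ + 1)) := by
      intro n hn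
      have hp := hnγpos n hn
      rw [hFc n hn]
      simp only []
      rw [integral_const_mul, ← intervalIntegral.integral_of_le hτ.le,
        betaIntegralValue hp (by linarith) hτ]
      have hΓ : Real.Gamma ((n:ℝ)*γ + 1) = ((n:ℝ)*γ) * Real.Gamma ((n:ℝ)*γ) :=
        Real.Gamma_add_one hp.ne'
      have hab : (n:ℝ)*γ + (1-γ) = ((n:ℝ)-1)*γ + 1 := by ring
      have hab2 : (n:ℝ)*γ + (1-γ) - 1 = ((n:ℝ)-1)*γ := by ring
      rw [hab2, hab, hΓ]
      have h1 : Real.Gamma ((n:ℝ)*γ) ≠ 0 := (Real.Gamma_pos_of_pos hp).ne'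
      have h2 : Real.Gamma (((n:ℝ)-1)*γ + 1) ≠ 0 := by
        have : (0:ℝ) < ((n:ℝ)-1)*γ + 1 := by nlinarith [hnγpos n hn]
        exact (Real.Gamma_pos_of_pos this).ne'
      field_simp
    have hnorm : ∀ n : ℕ, ∫ ρ in Set.Ioc (0:ℝ) τ, ‖F n ρ‖ = ∫ ρ in Set.Ioc (0:ℝ) τ, F n ρ := by
      intro n
      apply setIntegral_congr_fun measurableSet_Ioc
      intro ρ hρ
      have h1 : (0:ℝ) ≤ ρ := hρ.1.le
      have h2 : (0:ℝ) ≤ τ - ρ := by linarith [hρ.2]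
      apply Real.norm_of_nonneg
      have hΓ : (0:ℝ) ≤ Real.Gamma ((n:ℝ)*γ + 1) := by
        apply (Real.Gamma_pos_of_pos _).le
        positivity
      exact mul_nonneg (div_nonneg (mul_nonneg (by positivity) (Real.rpow_nonneg h1 _)) hΓ)
        (Real.rpow_nonneg h2 _)
    set T : ℕ → ℝ := fun n =>
      Real.Gamma (1-γ) * τ ^ (-γ) * ((τ ^ γ) ^ n / Real.Gamma ((n:ℝ)*γ + (1-γ))) with hT
    have hTsum : Summable T := by
      apply Summable.mul_left
      exact summable_rpow_div_Gamma hγ0 hγ1 (Real.rpow_nonneg hτ.le γ) (1-γ)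
    have hTnonneg : ∀ n : ℕ, 0 ≤ T n := by
      intro n
      have h1 : (0:ℝ) < Real.Gamma (1-γ) := Real.Gamma_pos_of_pos (by linarith)
      have h2 : (0:ℝ) ≤ Real.Gamma ((n:ℝ)*γ + (1-γ)) := by
        apply (Real.Gamma_pos_of_pos _).le
        have : (0:ℝ) ≤ (n:ℝ)*γ := by positivity
        linarith
      have h3 : (0:ℝ) ≤ τ ^ (-γ) := Real.rpow_nonneg hτ.le _
      have h4 : (0:ℝ) ≤ (τ ^ γ) ^ n := pow_nonneg (Real.rpow_nonneg hτ.le _) _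
      simp only [hT]
      positivity
    have hTval : ∀ n : ℕ, 1 ≤ n →
        T n = Real.Gamma (1-γ) * (τ ^ (((n:ℝ)-1)*γ) / Real.Gamma (((n:ℝ)-1)*γ + 1)) := by
      intro n hn
      simp only [hT]
      have e1 : (τ ^ γ) ^ n = τ ^ ((n:ℝ)*γ) := by
        rw [← Real.rpow_natCast (τ ^ γ) n, ← Real.rpow_mul hτ.le, mul_comm γ (n:ℝ)]
      have e2 : τ ^ (-γ) * τ ^ ((n:ℝ)*γ) = τ ^ (((n:ℝ)-1)*γ) := by
        rw [← Real.rpow_add hτ]; congr 1; ring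
      have e3 : (n:ℝ)*γ + (1-γ) = ((n:ℝ)-1)*γ + 1 := by ring
      rw [e1, e3, ← e2]; ring
    have hSum : Summable fun n : ℕ => ∫ ρ in Set.Ioc (0:ℝ) τ, ‖F n ρ‖ := by
      apply Summable.of_nonneg_of_le
        (fun n => integral_nonneg fun ρ => norm_nonneg _) _ hTsum
      intro n
      rcases Nat.eq_zero_or_pos n with rfl | hn
      · rw [hnorm, hF0]
        simp only [integral_zero]
        exact hTnonneg 0
      · rw [hnorm, hval n hn, hTval n hn]
    have hswap := integral_tsum_of_summable_integral_norm hInt hSum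
    have hIsummable : Summable fun n : ℕ => ∫ ρ in Set.Ioc (0:ℝ) τ, F n ρ :=
      (hasSum_integral_of_summable_integral_norm hInt hSum).summable
    -- compute the sum of integrals
    have htsumI : ∑' n : ℕ, (∫ ρ in Set.Ioc (0:ℝ) τ, F n ρ) = Real.Gamma (1-γ) * M := by
      rw [hIsummable.tsum_eq_zero_add]
      have hz : ∫ ρ in Set.Ioc (0:ℝ) τ, F 0 ρ = 0 := by rw [hF0]; simp
      rw [hz, zero_add]
      have : ∀ n : ℕ, (∫ ρ in Set.Ioc (0:ℝ) τ, F (n+1) ρ)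
          = Real.Gamma (1-γ) * (τ ^ ((n:ℝ)*γ) / Real.Gamma ((n:ℝ)*γ + 1)) := by
        intro n
        rw [hval (n+1) (by omega)]
        push_cast
        ring_nf
      rw [tsum_congr this, tsum_mul_left, hM, ml_eq hγ0 hτ.le]
    -- compute the integral
    have hint_eq : (∫ ρ in (0:ℝ)..τ, deriv (fun x : ℝ => ζ * mittagLeffler γ (x ^ γ)) ρ *
        (τ - ρ) ^ (-γ)) = ζ * (Real.Gamma (1-γ) * M) := by
      rw [intervalIntegral.integral_of_le hτ.le]
      rw [setIntegral_congr_fun measurableSet_Ioc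
        (g := fun ρ => ζ * ∑' n : ℕ, F n ρ) ?_]
      · rw [integral_const_mul, ← hswap, htsumI]
      · intro ρ hρ
        beta_reduce
        rw [hderiv ρ hρ.1]
        rw [show (ζ * ∑' n : ℕ, ((n:ℝ)*γ) * ρ ^ ((n:ℝ)*γ - 1) / Real.Gamma ((n:ℝ)*γ + 1)) *
            (τ - ρ) ^ (-γ) = ζ * ((∑' n : ℕ, ((n:ℝ)*γ) * ρ ^ ((n:ℝ)*γ - 1) /
            Real.Gamma ((n:ℝ)*γ + 1)) * (τ - ρ) ^ (-γ)) by ring]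
        rw [← tsum_mul_right]
    have hΓne : Real.Gamma (1-γ) ≠ 0 := (Real.Gamma_pos_of_pos (by linarith)).ne'
    calc (1 / Real.Gamma (1 - γ)) * (∫ ρ in (0:ℝ)..τ,
          deriv (fun x : ℝ => ζ * mittagLeffler γ (x ^ γ)) ρ * (τ - ρ) ^ (-γ))
        = (1 / Real.Gamma (1 - γ)) * (ζ * (Real.Gamma (1-γ) * M)) := by rw [hint_eq]
      _ = ζ * M := by field_simp
      _ = -(deriv (fun z : ℝ => z * (z * M)) ζ)
          + deriv (deriv fun z : ℝ => z ^ 2 / 2 * (z * M)) ζ := hRHS.symm
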